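/- Let l ≥ 2 and 1 ≤ i ≤ l − 1 be integers, and let β_{t_1}, …, β_{t_i}, η_i be real numbers with 0 < β_{t_1}, …, β_{t_i}, η_i < 1 and η_i = 1 − (β_{t_1} + ⋯ + β_{t_i}). There exists a constant C > 0, depending only on (β_{t_1}, …, β_{t_i}, η_i), such that for all integers d > 1 and all integers n ≥ 2, one has (1/d^{l−1}) ∑_{h_{t_1}=1}^{d−1} ⋯ ∑_{h_{t_i}=1}^{d−1} |β_{t_1} e(h_{t_1}/d) + ⋯ + β_{t_i} e(h_{t_i}/d) + η_i|^n ≤ C·(log n)/√n. -/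

import Mathlib

open Real Finset



lemma aux_sqrt (b e t : ℝ) (hb : 0 < b) (he : 0 < e) (hbe : b + e ≤ 1)
    (ht1 : -1 ≤ t) (ht2 : t ≤ 1) :
    Real.sqrt (b^2 + e^2 + 2*b*e*t) ≤ b + e - (b*e/(b+e)) * (1 - t) := by
  have hbe0 : 0 < b + e := by linarith
  have hs : (b*e/(b+e)) * (b+e) = b*e := by field_simp
  set s := b*e/(b+e) with hs'
  have hs0 : 0 < s := by positivity
  have hkey : s * (1 - t) * (b + e) = b * e * (1 - t) := by
    rw [mul_comm s (1-t), mul_assoc, hs]; ring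
  have hrhs : 0 ≤ b + e - s * (1 - t) := by
    nlinarith [hkey, sq_nonneg (b - e), mul_pos hb he, hbe0]
  have h1 : b^2 + e^2 + 2*b*e*t ≤ (b + e - s * (1 - t))^2 := by
    nlinarith [hkey, sq_nonneg (s*(1-t))]
  calc Real.sqrt (b^2 + e^2 + 2*b*e*t) ≤ Real.sqrt ((b + e - s * (1 - t))^2) :=
        Real.sqrt_le_sqrt h1
    _ = b + e - s * (1 - t) := Real.sqrt_sq hrhs

lemma aux_cos (x : ℝ) (h0 : 0 ≤ x) (h2 : x ≤ 1/2) : 8 * x^2 ≤ 1 - Real.cos (2*π*x) := by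
  have hsc := Real.sin_sq_add_cos_sq (π*x)
  have h1 : Real.cos (2*π*x) = 1 - 2 * Real.sin (π*x)^2 := by
    have h := Real.cos_two_mul' (π*x)
    rw [show 2*π*x = 2*(π*x) by ring, h]; linarith
  have hπ : (0:ℝ) < π := Real.pi_pos
  have hj : 2/π * (π*x) ≤ Real.sin (π*x) := Real.mul_le_sin (by positivity)
    (by nlinarith)
  have h2x : 2*x ≤ Real.sin (π*x) := by
    have he : 2/π * (π*x) = 2*x := by field_simp
    linarith [he ▸ hj]
  rw [h1]
  nlinarith

lemma exp_neg_le_inv (x : ℝ) (hx : 0 < x) : Real.exp (-x) ≤ 1/x := by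
  rw [Real.exp_neg, one_div]
  exact inv_anti₀ hx (by linarith [Real.add_one_le_exp x])

lemma exp_neg_le_inv_sq (x : ℝ) (hx : 0 < x) : Real.exp (-x) ≤ 4/x^2 := by
  have h : x^2/4 ≤ Real.exp x := by
    have h1 := Real.add_one_le_exp (x/2)
    have h2 : Real.exp x = Real.exp (x/2)^2 := by
      rw [← Real.exp_nat_mul]; norm_num; ring_nf
    nlinarith [Real.exp_pos (x/2)]
  rw [Real.exp_neg]
  have hx2 : (0:ℝ) < x^2/4 := by positivity
  calc (Real.exp x)⁻¹ ≤ (x^2/4)⁻¹ := inv_anti₀ hx2 h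
    _ = 4/x^2 := by field_simp

lemma tel1 (K : ℕ) (hK : 1 ≤ K) : ∀ N, ∑ k ∈ Finset.Ico (K+1) N, (1:ℝ)/k^2 ≤ 1/K := by
  have key : ∀ M : ℕ, ∑ k ∈ Finset.Ico (K+1) (K+1+M), (1:ℝ)/k^2 ≤ 1/K - 1/(K+M) := by
    intro M
    induction M with
    | zero => simp
    | succ m ih =>
      rw [show K+1+(m+1) = (K+1+m)+1 by ring, Finset.sum_Ico_succ_top (by omega)]
      have hKm : (0:ℝ) < (K:ℝ) + m := by positivity
      have h1 : ((K+1+m : ℕ) : ℝ) = (K:ℝ) + m + 1 := by push_cast; ring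
      have h2 : (1:ℝ)/((K:ℝ)+m+1)^2 ≤ 1/((K:ℝ)+m) - 1/((K:ℝ)+m+1) := by
        rw [div_sub_div _ _ (by positivity) (by positivity)]
        rw [div_le_div_iff₀ (by positivity) (by positivity)]
        ring_nf; nlinarith
      rw [h1]
      push_cast
      have h3 : ((K:ℝ)+((m:ℝ)+1)) = (K:ℝ)+(m:ℝ)+1 := by ring
      rw [h3]
      linarith
  intro N
  calc ∑ k ∈ Finset.Ico (K+1) N, (1:ℝ)/k^2 ≤ ∑ k ∈ Finset.Ico (K+1) (K+1+N), (1:ℝ)/k^2 := by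
        apply Finset.sum_le_sum_of_subset_of_nonneg
        · apply Finset.Ico_subset_Ico le_rfl; omega
        · intros; positivity
    _ ≤ 1/K - 1/(K+N) := key N
    _ ≤ 1/K := by
        have : (0:ℝ) ≤ 1/((K:ℝ)+N) := by positivity
        linarith

lemma tel2 (N : ℕ) : ∑ k ∈ Finset.Ico 1 N, (1:ℝ)/k^4 ≤ 2 := by
  rcases le_or_gt N 1 with h | h
  · rw [Finset.Ico_eq_empty (by omega)]; norm_num
  · rw [Finset.sum_eq_sum_Ico_succ_bot h]
    have hone : (1:ℝ)/((1:ℕ):ℝ)^4 = 1 := by norm_num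
    have hrest : ∑ k ∈ Finset.Ico (1+1) N, (1:ℝ)/k^4 ≤ 1 := by
      calc ∑ k ∈ Finset.Ico (1+1) N, (1:ℝ)/k^4 ≤ ∑ k ∈ Finset.Ico (1+1) N, (1:ℝ)/k^2 := by
            apply Finset.sum_le_sum
            intro k hk
            simp only [Finset.mem_Ico] at hk
            have hk1 : 1 ≤ k := by omega
            have hkr : (1:ℝ) ≤ (k:ℝ) := by exact_mod_cast hk1
            apply div_le_div_of_nonneg_left (by norm_num) (by positivity)
            have hsq : (1:ℝ) ≤ (k:ℝ)^2 := by nlinarith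
            nlinarith [mul_le_mul_of_nonneg_left hsq (sq_nonneg (k:ℝ))]
        _ ≤ 1/((1:ℕ):ℝ) := tel1 1 le_rfl N
        _ = 1 := by norm_num
    linarith


lemma sumS (A : ℝ) (hA : 0 < A) (d : ℕ) :
    ∑ k ∈ Finset.Ico 1 d, Real.exp (-(A*(k:ℝ)^2)) ≤ 8 / Real.sqrt A := by
  set r := Real.sqrt A with hrdef
  have hr0 : 0 < r := Real.sqrt_pos.2 hA
  have hr2 : r^2 = A := Real.sq_sqrt hA.le
  rcases le_or_gt 1 A with hA1 | hA1
  · -- big A : use exp(-x) ≤ 4/x²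
    have hr1 : 1 ≤ r := by nlinarith
    calc ∑ k ∈ Finset.Ico 1 d, Real.exp (-(A*(k:ℝ)^2))
        ≤ ∑ k ∈ Finset.Ico 1 d, (4/A^2) * ((1:ℝ)/k^4) := by
          apply Finset.sum_le_sum
          intro k hk
          simp only [Finset.mem_Ico] at hk
          have hk1 : (1:ℝ) ≤ (k:ℝ) := by exact_mod_cast hk.1
          have hx : 0 < A*(k:ℝ)^2 := by positivity
          calc Real.exp (-(A*(k:ℝ)^2)) ≤ 4/(A*(k:ℝ)^2)^2 := exp_neg_le_inv_sq _ hx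
            _ = (4/A^2) * ((1:ℝ)/k^4) := by field_simp
      _ = (4/A^2) * ∑ k ∈ Finset.Ico 1 d, (1:ℝ)/k^4 := by rw [Finset.mul_sum]
      _ ≤ (4/A^2) * 2 := by
          apply mul_le_mul_of_nonneg_left (tel2 d) (by positivity)
      _ ≤ 8 / r := by
          rw [div_mul_eq_mul_div, div_le_div_iff₀ (by positivity) hr0]
          have h4 : r ≤ r^4 := by nlinarith
          nlinarith
  · -- small A
    have hr1 : r < 1 := by nlinarith
    set K := Nat.ceil (1/r) with hKdef
    have hinvr : 1 ≤ 1/r := by rw [le_div_iff₀ hr0]; linarith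
    have hK1 : 1 ≤ K := by
      rw [hKdef]; exact Nat.one_le_ceil_iff.2 (by positivity)
    have hKge : 1/r ≤ (K:ℝ) := Nat.le_ceil _
    have hKle : (K:ℝ) ≤ 1/r + 1 := by
      have := Nat.ceil_lt_add_one (show (0:ℝ) ≤ 1/r by positivity)
      exact le_of_lt this
    have hK0 : (0:ℝ) < K := by exact_mod_cast hK1
    have split := Finset.sum_filter_add_sum_filter_not (Finset.Ico 1 d)
      (fun k => k ≤ K) (fun k => Real.exp (-(A*(k:ℝ)^2)))
    have part1 : ∑ k ∈ (Finset.Ico 1 d).filter (fun k => k ≤ K),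
        Real.exp (-(A*(k:ℝ)^2)) ≤ (K:ℝ) := by
      calc ∑ k ∈ (Finset.Ico 1 d).filter (fun k => k ≤ K), Real.exp (-(A*(k:ℝ)^2))
          ≤ ∑ _k ∈ (Finset.Ico 1 d).filter (fun k => k ≤ K), (1:ℝ) := by
            apply Finset.sum_le_sum
            intro k hk
            rw [← Real.exp_zero]
            apply Real.exp_le_exp.2
            have : (0:ℝ) ≤ A*(k:ℝ)^2 := by positivity
            linarith
        _ = ((Finset.Ico 1 d).filter (fun k => k ≤ K)).card := by
            rw [Finset.sum_const]; simp
        _ ≤ ((Finset.Ico 1 (K+1)).card : ℝ) := by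
            have hsub : (Finset.Ico 1 d).filter (fun k => k ≤ K) ⊆ Finset.Ico 1 (K+1) := by
              intro k hk
              simp only [Finset.mem_filter, Finset.mem_Ico] at hk ⊢
              omega
            exact_mod_cast Finset.card_le_card hsub
        _ = (K:ℝ) := by rw [Nat.card_Ico]; simp
    have part2 : ∑ k ∈ (Finset.Ico 1 d).filter (fun k => ¬ k ≤ K),
        Real.exp (-(A*(k:ℝ)^2)) ≤ (1/A) * (1/K) := by
      have hset : (Finset.Ico 1 d).filter (fun k => ¬ k ≤ K) = Finset.Ico (K+1) d := by
        ext k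
        simp only [Finset.mem_filter, Finset.mem_Ico]
        omega
      rw [hset]
      calc ∑ k ∈ Finset.Ico (K+1) d, Real.exp (-(A*(k:ℝ)^2))
          ≤ ∑ k ∈ Finset.Ico (K+1) d, (1/A) * ((1:ℝ)/k^2) := by
            apply Finset.sum_le_sum
            intro k hk
            simp only [Finset.mem_Ico] at hk
            have hk1 : (1:ℝ) ≤ (k:ℝ) := by
              have : 1 ≤ k := by omega
              exact_mod_cast this
            have hx : 0 < A*(k:ℝ)^2 := by positivity
            calc Real.exp (-(A*(k:ℝ)^2)) ≤ 1/(A*(k:ℝ)^2) := exp_neg_le_inv _ hx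
              _ = (1/A) * ((1:ℝ)/k^2) := by field_simp
        _ = (1/A) * ∑ k ∈ Finset.Ico (K+1) d, (1:ℝ)/k^2 := by rw [Finset.mul_sum]
        _ ≤ (1/A) * (1/K) := by
            apply mul_le_mul_of_nonneg_left (tel1 K hK1 d) (by positivity)
    have hKb : (K:ℝ) ≤ 2/r := by
      calc (K:ℝ) ≤ 1/r + 1 := hKle
        _ ≤ 1/r + 1/r := by linarith
        _ = 2/r := by ring
    have hpart2b : (1/A) * (1/K) ≤ 1/r := by
      have h1K : 1/(K:ℝ) ≤ r := by
        rw [div_le_iff₀ hK0]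
        calc (1:ℝ) = r * (1/r) := by field_simp
          _ ≤ r * K := by exact mul_le_mul_of_nonneg_left hKge hr0.le
      calc (1/A) * (1/K) ≤ (1/A) * r := by
            exact mul_le_mul_of_nonneg_left h1K (by positivity)
        _ = 1/r := by
          rw [← hr2]; field_simp
    calc ∑ k ∈ Finset.Ico 1 d, Real.exp (-(A*(k:ℝ)^2))
        = _ + _ := split.symm
      _ ≤ (K:ℝ) + (1/A) * (1/K) := add_le_add part1 part2
      _ ≤ 2/r + 1/r := add_le_add hKb hpart2b
      _ ≤ 8/r := by
          rw [← add_div, div_le_div_iff₀ hr0 hr0]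
          nlinarith


lemma abs_aux (b e θ : ℝ) (hb : 0 < b) (he : 0 < e) (hbe : b + e ≤ 1) :
    ‖(b:ℂ) * Complex.exp ((θ:ℂ) * Complex.I) + (e:ℂ)‖
      ≤ b + e - (b*e/(b+e)) * (1 - Real.cos θ) := by
  have habs : ‖(b:ℂ) * Complex.exp ((θ:ℂ) * Complex.I) + (e:ℂ)‖
      = Real.sqrt (b^2 + e^2 + 2*b*e*Real.cos θ) := by
    rw [Complex.norm_def, Complex.normSq_apply]
    simp only [Complex.add_re, Complex.add_im, Complex.mul_re, Complex.mul_im,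
      Complex.exp_ofReal_mul_I_re, Complex.exp_ofReal_mul_I_im,
      Complex.ofReal_re, Complex.ofReal_im]
    congr 1
    nlinarith [Real.sin_sq_add_cos_sq θ]
  rw [habs]
  exact aux_sqrt b e (Real.cos θ) hb he hbe (Real.neg_one_le_cos θ) (Real.cos_le_one θ)


lemma point (i : ℕ) (β : Fin i → ℝ) (η : ℝ) (a0 : Fin i) (hβ0 : ∀ a, 0 < β a)
    (hη0 : 0 < η) (hsum : ∑ a, β a = 1 - η) (d : ℕ) (hd : 1 < d) (h : Fin i → ℕ) :
    ‖∑ a, (β a : ℂ) *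
        Complex.exp (2 * Real.pi * Complex.I * (h a : ℂ) / (d : ℂ)) + (η : ℂ)‖
      ≤ 1 - (β a0 * η/(β a0 + η)) * (1 - Real.cos (2*π*(h a0)/d)) := by
  have hb : 0 < β a0 := hβ0 a0
  have hble : β a0 ≤ 1 - η := by
    rw [← hsum]
    exact Finset.single_le_sum (fun a _ => (hβ0 a).le) (Finset.mem_univ a0)
  have hbe : β a0 + η ≤ 1 := by linarith
  have hE : ∀ k : ℕ, (2 * (Real.pi:ℂ) * Complex.I * (k : ℂ) / (d : ℂ))
      = ((2*π*k/d : ℝ) : ℂ) * Complex.I := by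
    intro k; push_cast; ring
  set f : Fin i → ℂ := fun a => (β a : ℂ) *
      Complex.exp (2 * Real.pi * Complex.I * (h a : ℂ) / (d : ℂ)) with hf
  have habsf : ∀ a, ‖f a‖ = β a := by
    intro a
    rw [hf]
    simp only [norm_mul, Complex.norm_real, Real.norm_eq_abs, hE (h a), Complex.norm_exp_ofReal_mul_I,
      abs_of_pos (hβ0 a), mul_one]
  have hsplit : ∑ a, f a = (∑ a ∈ Finset.univ.erase a0, f a) + f a0 :=
    (Finset.sum_erase_add _ _ (Finset.mem_univ a0)).symm
  have herase : ∑ a ∈ Finset.univ.erase a0, β a = 1 - η - β a0 := by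
    have := Finset.sum_erase_add Finset.univ β (Finset.mem_univ a0)
    rw [hsum] at this; linarith
  calc ‖∑ a, f a + (η:ℂ)‖
      = ‖(∑ a ∈ Finset.univ.erase a0, f a) + (f a0 + (η:ℂ))‖ := by
        rw [hsplit, add_assoc]
    _ ≤ ‖∑ a ∈ Finset.univ.erase a0, f a‖ + ‖f a0 + (η:ℂ)‖ :=
        norm_add_le _ _
    _ ≤ (∑ a ∈ Finset.univ.erase a0, β a)
        + (β a0 + η - (β a0 * η/(β a0 + η)) * (1 - Real.cos (2*π*(h a0)/d))) := by
        apply add_le_add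
        · calc ‖∑ a ∈ Finset.univ.erase a0, f a‖
              ≤ ∑ a ∈ Finset.univ.erase a0, ‖f a‖ :=
                norm_sum_le _ _
            _ = ∑ a ∈ Finset.univ.erase a0, β a :=
                Finset.sum_congr rfl (fun a _ => habsf a)
        · have hfa0 : f a0 = ((β a0 : ℝ):ℂ)
              * Complex.exp (((2*π*(h a0)/d : ℝ) : ℂ) * Complex.I) := by
            rw [hf]; simp only [hE (h a0)]
          rw [hfa0]
          exact abs_aux (β a0) η (2*π*(h a0)/d) hb hη0 hbe
    _ = 1 - (β a0 * η/(β a0 + η)) * (1 - Real.cos (2*π*(h a0)/d)) := by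
        rw [herase]; ring


set_option maxHeartbeats 2000000 in
theorem statement6 (l i : ℕ) (hl : 2 ≤ l) (hi1 : 1 ≤ i) (hil : i ≤ l - 1)
    (β : Fin i → ℝ) (η : ℝ)
    (hβ0 : ∀ a, 0 < β a) (hβ1 : ∀ a, β a < 1)
    (hη0 : 0 < η) (hη1 : η < 1) (hη : η = 1 - ∑ a, β a) :
    ∃ C : ℝ, 0 < C ∧ ∀ d : ℕ, 1 < d → ∀ n : ℕ, 2 ≤ n →
      (1 / (d : ℝ) ^ (l - 1)) *
          ∑ h ∈ Fintype.piFinset (fun _ : Fin i => Finset.Ico 1 d),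
            ‖∑ a, (β a : ℂ) *
                Complex.exp (2 * Real.pi * Complex.I * (h a : ℂ) / (d : ℂ)) + (η : ℂ)‖ ^ n
        ≤ C * Real.log n / Real.sqrt n := by
  have a0 : Fin i := ⟨0, hi1⟩
  set b := β a0 with hbdef
  have hb : 0 < b := hβ0 a0
  have hsum : ∑ a, β a = 1 - η := by rw [hη]; ring
  have hble : b ≤ 1 - η := by
    rw [← hsum]
    exact Finset.single_le_sum (fun a _ => (hβ0 a).le) (Finset.mem_univ a0)
  have hbe1 : b + η ≤ 1 := by linarith
  have hbe0 : 0 < b + η := by linarith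
  set c := b * η / (b + η) with hcdef
  have hc : 0 < c := by positivity
  have hc8 : 0 < Real.sqrt (8*c) := Real.sqrt_pos.2 (by linarith)
  have hlog2 : 0 < Real.log 2 := Real.log_pos (by norm_num)
  refine ⟨16 / (Real.sqrt (8*c) * Real.log 2), by positivity, ?_⟩
  intro d hd n hn
  have hd0 : (0:ℝ) < d := by exact_mod_cast Nat.lt_of_lt_of_le Nat.zero_lt_one hd.le
  have hd1 : (1:ℝ) ≤ d := by exact_mod_cast hd.le
  have hn2 : (2:ℝ) ≤ n := by exact_mod_cast hn
  have hn0 : (0:ℝ) < n := by linarith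
  set A := 8*c*(n:ℝ)/(d:ℝ)^2 with hAdef
  have hA : 0 < A := by positivity
  set F : ℕ → ℝ := fun k => Real.exp (-((n:ℝ)*c*(1 - Real.cos (2*π*(k:ℝ)/(d:ℝ))))) with hFdef
  -- pointwise bound
  have hpw : ∀ h ∈ Fintype.piFinset (fun _ : Fin i => Finset.Ico 1 d),
      ‖∑ a, (β a : ℂ) *
        Complex.exp (2 * Real.pi * Complex.I * (h a : ℂ) / (d : ℂ)) + (η : ℂ)‖ ^ n
        ≤ F (h a0) := by
    intro h _
    have hρ := point i β η a0 hβ0 hη0 hsum d hd h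
    have hcos1 : Real.cos (2*π*(h a0)/d) ≤ 1 := Real.cos_le_one _
    have hcosm : -1 ≤ Real.cos (2*π*(h a0)/d) := Real.neg_one_le_cos _
    have hc' : c * (b+η) = b*η := by rw [hcdef]; field_simp
    have hc14 : c ≤ 1/4 := by nlinarith [sq_nonneg (b-η)]
    have hρ0 : 0 ≤ 1 - c*(1 - Real.cos (2*π*(h a0)/d)) := by
      nlinarith [mul_le_mul_of_nonneg_left
        (by linarith : 1 - Real.cos (2*π*(h a0)/d) ≤ 2) hc.le]
    calc ‖∑ a, (β a : ℂ) *
        Complex.exp (2 * Real.pi * Complex.I * (h a : ℂ) / (d : ℂ)) + (η : ℂ)‖ ^ n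
        ≤ (1 - c*(1 - Real.cos (2*π*(h a0)/d)))^n := by
          rw [← hbdef, ← hcdef] at hρ
          exact pow_le_pow_left₀ (norm_nonneg _) hρ n
      _ ≤ (Real.exp (-(c*(1 - Real.cos (2*π*(h a0)/d)))))^n := by
          apply pow_le_pow_left₀ hρ0
          linarith [Real.add_one_le_exp (-(c*(1 - Real.cos (2*π*(h a0)/d))))]
      _ = F (h a0) := by
          rw [hFdef, ← Real.exp_nat_mul]
          congr 1; ring
  have hstep1 : (∑ h ∈ Fintype.piFinset (fun _ : Fin i => Finset.Ico 1 d),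
      ‖∑ a, (β a : ℂ) *
        Complex.exp (2 * Real.pi * Complex.I * (h a : ℂ) / (d : ℂ)) + (η : ℂ)‖ ^ n)
      ≤ ∑ h ∈ Fintype.piFinset (fun _ : Fin i => Finset.Ico 1 d), F (h a0) :=
    Finset.sum_le_sum hpw
  -- factor the sum
  have hfac : ∑ h ∈ Fintype.piFinset (fun _ : Fin i => Finset.Ico 1 d), F (h a0)
      = (∑ k ∈ Finset.Ico 1 d, F k) * (((d-1:ℕ)):ℝ)^(i-1) := by
    have h1 : ∀ p : Fin i → ℕ, F (p a0) = ∏ a, (if a = a0 then F (p a) else 1) := by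
      intro p
      rw [Finset.prod_ite_eq' Finset.univ a0 (fun a => F (p a))]
      simp
    have h2 : ∀ a ∈ Finset.univ.erase a0,
        (∑ k ∈ Finset.Ico 1 d, (if a = a0 then F k else 1)) = (((d-1:ℕ)):ℝ) := by
      intro a ha
      have hne := Finset.ne_of_mem_erase ha
      simp [hne, Nat.card_Ico]
    calc ∑ h ∈ Fintype.piFinset (fun _ : Fin i => Finset.Ico 1 d), F (h a0)
        = ∑ p ∈ Fintype.piFinset (fun _ : Fin i => Finset.Ico 1 d),
            ∏ a, (if a = a0 then F (p a) else 1) :=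
          Finset.sum_congr rfl (fun p _ => h1 p)
      _ = ∏ a, ∑ k ∈ Finset.Ico 1 d, (if a = a0 then F k else 1) :=
          (Finset.prod_univ_sum (fun _ => Finset.Ico 1 d)
            (fun a k => if a = a0 then F k else 1)).symm
      _ = (∑ k ∈ Finset.Ico 1 d, (if a0 = a0 then F k else 1))
            * ∏ a ∈ Finset.univ.erase a0,
                ∑ k ∈ Finset.Ico 1 d, (if a = a0 then F k else 1) :=
          (Finset.mul_prod_erase Finset.univ _ (Finset.mem_univ a0)).symm
      _ = (∑ k ∈ Finset.Ico 1 d, F k) * (((d-1:ℕ)):ℝ)^(i-1) := by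
          rw [Finset.prod_congr rfl h2, Finset.prod_const,
            Finset.card_erase_of_mem (Finset.mem_univ a0), Finset.card_univ,
            Fintype.card_fin]
          congr 1
          exact Finset.sum_congr rfl (fun k _ => if_pos rfl)
  -- cos lower bound termwise
  have hFb : ∀ k ∈ Finset.Ico 1 d, F k ≤ Real.exp (-(A*(k:ℝ)^2))
      + Real.exp (-(A*(((d-k:ℕ)):ℝ)^2)) := by
    intro k hk
    simp only [Finset.mem_Ico] at hk
    obtain ⟨hk1, hkd⟩ := hk
    have hkr : (k:ℝ) ≤ d := by exact_mod_cast hkd.le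
    rcases le_or_gt (2*k) d with hcase | hcase
    · have hx0 : (0:ℝ) ≤ (k:ℝ)/d := by positivity
      have h2kr : 2*(k:ℝ) ≤ d := by exact_mod_cast hcase
      have hx2 : (k:ℝ)/d ≤ 1/2 := by
        rw [div_le_div_iff₀ hd0 (by norm_num)]; linarith
      have hcosb := aux_cos ((k:ℝ)/d) hx0 hx2
      rw [show 2*π*((k:ℝ)/d) = 2*π*(k:ℝ)/d by ring] at hcosb
      have hAk : A*(k:ℝ)^2 = (n:ℝ)*c*(8*((k:ℝ)/d)^2) := by
        rw [hAdef]; field_simp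
      have hFk : F k ≤ Real.exp (-(A*(k:ℝ)^2)) := by
        apply Real.exp_le_exp.2
        rw [hAk]
        have := mul_le_mul_of_nonneg_left hcosb (by positivity : (0:ℝ) ≤ (n:ℝ)*c)
        linarith
      linarith [(Real.exp_pos (-(A*(((d-k:ℕ)):ℝ)^2))).le]
    · have hcast : (((d-k:ℕ)):ℝ) = (d:ℝ) - k := by
        rw [Nat.cast_sub hkd.le]
      have hx0 : (0:ℝ) ≤ ((d:ℝ)-k)/d := by
        apply div_nonneg (by linarith) hd0.le
      have h2dk : 2*((d:ℝ)-(k:ℝ)) ≤ d := by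
        have h1 : 2*(d-k) ≤ d := by omega
        have : (2*(d-k):ℕ) ≤ (d:ℕ) := h1
        have h2 : ((2*(d-k):ℕ):ℝ) ≤ (d:ℝ) := by exact_mod_cast this
        rw [Nat.cast_mul, Nat.cast_sub hkd.le] at h2
        push_cast at h2 ⊢
        linarith
      have hx2 : ((d:ℝ)-k)/d ≤ 1/2 := by
        rw [div_le_div_iff₀ hd0 (by norm_num)]; linarith
      have hcosb := aux_cos (((d:ℝ)-k)/d) hx0 hx2
      have hrefl : Real.cos (2*π*(((d:ℝ)-k)/d)) = Real.cos (2*π*(k:ℝ)/d) := by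
        rw [show 2*π*(((d:ℝ)-k)/d) = 2*π - 2*π*(k:ℝ)/d by field_simp]
        exact Real.cos_two_pi_sub _
      rw [hrefl] at hcosb
      have hAk : A*(((d:ℝ)-k))^2 = (n:ℝ)*c*(8*(((d:ℝ)-k)/d)^2) := by
        rw [hAdef]; field_simp
      have hFk : F k ≤ Real.exp (-(A*(((d-k:ℕ)):ℝ)^2)) := by
        apply Real.exp_le_exp.2
        rw [hcast, hAk]
        have := mul_le_mul_of_nonneg_left hcosb (by positivity : (0:ℝ) ≤ (n:ℝ)*c)
        linarith
      linarith [(Real.exp_pos (-(A*(k:ℝ)^2))).le]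
  -- reflection
  have hrefsum : ∑ k ∈ Finset.Ico 1 d, Real.exp (-(A*(((d-k:ℕ)):ℝ)^2))
      = ∑ k ∈ Finset.Ico 1 d, Real.exp (-(A*(k:ℝ)^2)) := by
    apply Finset.sum_nbij' (i := fun k => d - k) (j := fun k => d - k)
    · intro a ha; simp only [Finset.mem_Ico] at ha ⊢; omega
    · intro a ha; simp only [Finset.mem_Ico] at ha ⊢; omega
    · intro a ha; simp only [Finset.mem_Ico] at ha; omega
    · intro a ha; simp only [Finset.mem_Ico] at ha; omega
    · intro a _; rfl
  have hT2U : ∑ k ∈ Finset.Ico 1 d, F k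
      ≤ 2 * ∑ k ∈ Finset.Ico 1 d, Real.exp (-(A*(k:ℝ)^2)) := by
    calc ∑ k ∈ Finset.Ico 1 d, F k
        ≤ ∑ k ∈ Finset.Ico 1 d, (Real.exp (-(A*(k:ℝ)^2))
            + Real.exp (-(A*(((d-k:ℕ)):ℝ)^2))) := Finset.sum_le_sum hFb
      _ = ∑ k ∈ Finset.Ico 1 d, Real.exp (-(A*(k:ℝ)^2))
            + ∑ k ∈ Finset.Ico 1 d, Real.exp (-(A*(((d-k:ℕ)):ℝ)^2)) :=
          Finset.sum_add_distrib
      _ = 2 * ∑ k ∈ Finset.Ico 1 d, Real.exp (-(A*(k:ℝ)^2)) := by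
          rw [hrefsum]; ring
  have hU8 : ∑ k ∈ Finset.Ico 1 d, Real.exp (-(A*(k:ℝ)^2)) ≤ 8 / Real.sqrt A :=
    sumS A hA d
  -- arithmetic
  have hsqrtA : Real.sqrt A = Real.sqrt (8*c) * Real.sqrt n / d := by
    rw [hAdef, Real.sqrt_div (by positivity) ((d:ℝ)^2), Real.sqrt_sq hd0.le,
      Real.sqrt_mul (by positivity)]
  have hsA : 0 < Real.sqrt A := Real.sqrt_pos.2 hA
  have hsn : 0 < Real.sqrt n := Real.sqrt_pos.2 hn0
  have hdm1 : (((d-1:ℕ)):ℝ)^(i-1) ≤ (d:ℝ)^(i-1) := by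
    apply pow_le_pow_left₀ (by positivity)
    exact_mod_cast Nat.sub_le d 1
  have hSb : ∑ h ∈ Fintype.piFinset (fun _ : Fin i => Finset.Ico 1 d),
      ‖∑ a, (β a : ℂ) *
        Complex.exp (2 * Real.pi * Complex.I * (h a : ℂ) / (d : ℂ)) + (η : ℂ)‖ ^ n
      ≤ (16 / Real.sqrt A) * (d:ℝ)^(i-1) := by
    calc ∑ h ∈ Fintype.piFinset (fun _ : Fin i => Finset.Ico 1 d),
        ‖∑ a, (β a : ℂ) *
          Complex.exp (2 * Real.pi * Complex.I * (h a : ℂ) / (d : ℂ)) + (η : ℂ)‖ ^ n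
        ≤ (∑ k ∈ Finset.Ico 1 d, F k) * (((d-1:ℕ)):ℝ)^(i-1) := by
          rw [← hfac]; exact hstep1
      _ ≤ (2 * (8 / Real.sqrt A)) * (((d-1:ℕ)):ℝ)^(i-1) := by
          apply mul_le_mul_of_nonneg_right _ (by positivity)
          calc ∑ k ∈ Finset.Ico 1 d, F k
              ≤ 2 * ∑ k ∈ Finset.Ico 1 d, Real.exp (-(A*(k:ℝ)^2)) := hT2U
            _ ≤ 2 * (8 / Real.sqrt A) := by linarith
      _ ≤ (16 / Real.sqrt A) * (d:ℝ)^(i-1) := by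
          rw [show 2 * (8/Real.sqrt A) = 16/Real.sqrt A by ring]
          exact mul_le_mul_of_nonneg_left hdm1 (by positivity)
  have hdpow : (d:ℝ)^i ≤ (d:ℝ)^(l-1) := pow_le_pow_right₀ hd1 hil
  have hdi : (d:ℝ)^i = (d:ℝ)^(i-1) * d := by
    rw [← pow_succ]
    congr 1
    omega
  have hkey : (1 / (d : ℝ) ^ (l - 1)) * ((16 / Real.sqrt A) * (d:ℝ)^(i-1))
      ≤ 16 * Real.log n / (Real.sqrt (8*c) * Real.log 2 * Real.sqrt n) := by
    have hlogn : Real.log 2 ≤ Real.log n := by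
      apply Real.log_le_log (by norm_num)
      exact_mod_cast hn
    have harith : ∀ P Q s t dd : ℝ, 0 < P → 0 < s → 0 < t → 0 < dd →
        (1/P)*((16/(s*t/dd))*Q) = 16*((Q*dd)/P)/(s*t) := by
      intro P Q s t dd hP hs ht hdd
      field_simp
    have e1 : (1 / (d : ℝ) ^ (l - 1)) * ((16 / Real.sqrt A) * (d:ℝ)^(i-1))
        = 16 * ((d:ℝ)^i / (d:ℝ)^(l-1)) / (Real.sqrt (8*c) * Real.sqrt n) := by
      rw [hsqrtA, harith _ _ _ _ _ (by positivity) hc8 hsn hd0, ← hdi]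
    rw [e1]
    have e2 : (d:ℝ)^i / (d:ℝ)^(l-1) ≤ 1 := by
      apply div_le_one_of_le₀ hdpow (by positivity)
    calc 16 * ((d:ℝ)^i / (d:ℝ)^(l-1)) / (Real.sqrt (8*c) * Real.sqrt n)
        ≤ 16 * 1 / (Real.sqrt (8*c) * Real.sqrt n) := by
          gcongr
      _ ≤ 16 * Real.log n / (Real.sqrt (8*c) * Real.log 2 * Real.sqrt n) := by
          rw [div_le_div_iff₀ (by positivity) (by positivity)]
          have : (0:ℝ) < Real.log n := lt_of_lt_of_le hlog2 hlogn
          nlinarith [mul_pos hc8 hsn, mul_pos (mul_pos hc8 hlog2) hsn,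
            mul_nonneg (mul_nonneg (sub_nonneg.2 hlogn) hc8.le) hsn.le]
  calc (1 / (d : ℝ) ^ (l - 1)) *
      ∑ h ∈ Fintype.piFinset (fun _ : Fin i => Finset.Ico 1 d),
        ‖∑ a, (β a : ℂ) *
            Complex.exp (2 * Real.pi * Complex.I * (h a : ℂ) / (d : ℂ)) + (η : ℂ)‖ ^ n
      ≤ (1 / (d : ℝ) ^ (l - 1)) * ((16 / Real.sqrt A) * (d:ℝ)^(i-1)) := by
        apply mul_le_mul_of_nonneg_left hSb (by positivity)
    _ ≤ 16 * Real.log n / (Real.sqrt (8*c) * Real.log 2 * Real.sqrt n) := hkey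
    _ = 16 / (Real.sqrt (8*c) * Real.log 2) * Real.log n / Real.sqrt n := by
        rw [div_mul_eq_mul_div, div_div]
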